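/- The pair (A, α) is an H-module coalgebra: for all h, h' ∈ H and a ∈ A, (i) α(h h' ⊗ a) = α(h ⊗ α(h' ⊗ a)); (ii) α(1_H ⊗ a) = a; (iii) ε_A(α(h ⊗ a)) = ε_H(h)·ε_A(a); (iv) Δ_A(α(h ⊗ a)) = Σ α(h₁ ⊗ a₁) ⊗ α(h₂ ⊗ a₂). -/

import Mathlib

open TensorProduct

noncomputable section

universe u

variable {k A H X : Type u} [Field k]
  [Ring A] [Ring H] [Ring X]
  [Bialgebra k A] [Bialgebra k H] [Bialgebra k X]

/-- ζ : H ⊗ A → A ⊗ H, ζ(h ⊗ a) = ξ⁻¹(j_H(h) · j_A(a)). -/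
def zetaF (jA : A →ₐc[k] X) (jH : H →ₐc[k] X) (ξ : (A ⊗[k] H) ≃ₗ[k] X) :
    H ⊗[k] A →ₗ[k] A ⊗[k] H :=
  ξ.symm.toLinearMap ∘ₗ LinearMap.mul' k X ∘ₗ
    TensorProduct.map (jH : H →ₗ[k] X) (jA : A →ₗ[k] X)

/-- α := (id_A ⊗ ε_H) ∘ ζ. -/
def alphaF (jA : A →ₐc[k] X) (jH : H →ₐc[k] X) (ξ : (A ⊗[k] H) ≃ₗ[k] X) :
    H ⊗[k] A →ₗ[k] A :=
  (TensorProduct.rid k A).toLinearMap ∘ₗ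
    TensorProduct.map LinearMap.id Coalgebra.counit ∘ₗ zetaF jA jH ξ

/-- β := (ε_A ⊗ id_H) ∘ ζ. -/
def betaF (jA : A →ₐc[k] X) (jH : H →ₐc[k] X) (ξ : (A ⊗[k] H) ≃ₗ[k] X) :
    H ⊗[k] A →ₗ[k] H :=
  (TensorProduct.lid k H).toLinearMap ∘ₗ
    TensorProduct.map Coalgebra.counit LinearMap.id ∘ₗ zetaF jA jH ξ

/-- ᾱ : A ⊗ H → A, a ⊗ h ↦ ε(h) • a. -/
def abarF : A ⊗[k] H →ₗ[k] A :=
  (TensorProduct.rid k A).toLinearMap ∘ₗ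
    TensorProduct.map LinearMap.id Coalgebra.counit

lemma abarF_tmul (a : A) (h : H) :
    abarF (a ⊗ₜ[k] h) = (Coalgebra.counit (R := k) h) • a := by
  simp [abarF]

lemma alphaF_eq (jA : A →ₐc[k] X) (jH : H →ₐc[k] X) (ξ : (A ⊗[k] H) ≃ₗ[k] X) :
    alphaF jA jH ξ = abarF ∘ₗ zetaF jA jH ξ := rfl

lemma zetaF_tmul (jA : A →ₐc[k] X) (jH : H →ₐc[k] X) (ξ : (A ⊗[k] H) ≃ₗ[k] X)
    (h : H) (a : A) :
    zetaF jA jH ξ (h ⊗ₜ[k] a) = ξ.symm (jH h * jA a) := by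
  simp [zetaF]

lemma xi_zetaF (jA : A →ₐc[k] X) (jH : H →ₐc[k] X) (ξ : (A ⊗[k] H) ≃ₗ[k] X)
    (h : H) (a : A) :
    ξ (zetaF jA jH ξ (h ⊗ₜ[k] a)) = jH h * jA a := by
  rw [zetaF_tmul, ξ.apply_symm_apply]

/-- ε_{H⊗H}(Δ h) = ε h. -/
lemma counit_tensor_comul (h : H) :
    Coalgebra.counit (R := k) (A := H ⊗[k] H) (Coalgebra.comul (R := k) h)
      = Coalgebra.counit (R := k) h := by
  have h1 := Coalgebra.rTensor_counit_comul (R := k) (A := H) h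
  have h2 : TensorProduct.map (Coalgebra.counit (R := k)) (Coalgebra.counit (R := k))
      (Coalgebra.comul (R := k) h) = (1 : k) ⊗ₜ[k] Coalgebra.counit (R := k) h := by
    rw [← LinearMap.lTensor_comp_rTensor, LinearMap.comp_apply, h1, LinearMap.lTensor_tmul]
  simp [TensorProduct.counit_def, TensorProduct.AlgebraTensorModule.map_eq, h2]

set_option maxHeartbeats 1000000 in
/-- (A, α) is an H-module coalgebra. -/
theorem alpha_module_coalgebra (jA : A →ₐc[k] X) (jH : H →ₐc[k] X)
    (ξ : (A ⊗[k] H) ≃ₗ[k] X)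
    (hξ : ∀ (a : A) (h : H), ξ (a ⊗ₜ[k] h) = jA a * jH h) :
    ∀ (h h' : H) (a : A),
      alphaF jA jH ξ ((h * h') ⊗ₜ[k] a)
        = alphaF jA jH ξ (h ⊗ₜ[k] alphaF jA jH ξ (h' ⊗ₜ[k] a)) ∧
      alphaF jA jH ξ ((1 : H) ⊗ₜ[k] a) = a ∧
      Coalgebra.counit (R := k) (alphaF jA jH ξ (h ⊗ₜ[k] a))
        = Coalgebra.counit (R := k) h * Coalgebra.counit (R := k) a ∧
      Coalgebra.comul (R := k) (alphaF jA jH ξ (h ⊗ₜ[k] a))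
        = TensorProduct.map (alphaF jA jH ξ) (alphaF jA jH ξ)
            (Coalgebra.comul (R := k) (h ⊗ₜ[k] a)) := by
  have hsymm : ∀ (a : A) (h : H), ξ.symm (jA a * jH h) = a ⊗ₜ[k] h := by
    intro a h; rw [← hξ, ξ.symm_apply_apply]
  intro h h' a
  refine ⟨?_, ?_, ?_, ?_⟩
  · -- associativity
    set ζ := zetaF jA jH ξ with hζ
    set Φ : A ⊗[k] H →ₗ[k] A ⊗[k] H :=
      (TensorProduct.map LinearMap.id (LinearMap.mul' k H)) ∘ₗ
        (TensorProduct.assoc k A H H).toLinearMap ∘ₗ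
        (LinearMap.rTensor H (ζ ∘ₗ TensorProduct.mk k H A h)) with hΦ
    have S : ξ.toLinearMap ∘ₗ (TensorProduct.map LinearMap.id (LinearMap.mul' k H)) ∘ₗ
        (TensorProduct.assoc k A H H).toLinearMap
        = (LinearMap.mul' k X) ∘ₗ TensorProduct.map ξ.toLinearMap (jH : H →ₗ[k] X) := by
      ext a₀ h₀ h₁
      simp [hξ, map_mul, mul_assoc]
    have S2 : (abarF : A ⊗[k] H →ₗ[k] A) ∘ₗ
        (TensorProduct.map LinearMap.id (LinearMap.mul' k H)) ∘ₗ
        (TensorProduct.assoc k A H H).toLinearMap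
        = (TensorProduct.rid k A).toLinearMap ∘ₗ
          TensorProduct.map (abarF : A ⊗[k] H →ₗ[k] A) (Coalgebra.counit (R := k)) := by
      ext a₀ h₀ h₁
      simp [abarF_tmul, smul_smul, mul_comm]
    have C1 : ∀ t : A ⊗[k] H, ξ (Φ t) = jH h * ξ t := by
      intro t
      induction t using TensorProduct.induction_on with
      | zero => simp
      | tmul a₀ h₀ =>
          have hS := LinearMap.congr_fun S (ζ (h ⊗ₜ[k] a₀) ⊗ₜ[k] h₀)
          simp only [LinearMap.comp_apply, LinearEquiv.coe_coe, TensorProduct.map_tmul,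
            LinearMap.mul'_apply] at hS
          simp only [hΦ, LinearMap.comp_apply, LinearMap.rTensor_tmul,
            TensorProduct.mk_apply, LinearEquiv.coe_coe]
          rw [hS, hζ, xi_zetaF jA jH ξ, hξ]
          simp [mul_assoc]
      | add x y hx hy => simp [map_add, hx, hy, mul_add]
    have C2 : ∀ t : A ⊗[k] H, abarF (Φ t) = alphaF jA jH ξ (h ⊗ₜ[k] abarF t) := by
      intro t
      induction t using TensorProduct.induction_on with
      | zero => simp
      | tmul a₀ h₀ =>
          have hS := LinearMap.congr_fun S2 (ζ (h ⊗ₜ[k] a₀) ⊗ₜ[k] h₀)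
          simp only [LinearMap.comp_apply, LinearEquiv.coe_coe, TensorProduct.map_tmul,
            TensorProduct.rid_tmul] at hS
          simp only [hΦ, LinearMap.comp_apply, LinearMap.rTensor_tmul,
            TensorProduct.mk_apply, LinearEquiv.coe_coe]
          rw [hS, abarF_tmul, tmul_smul, map_smul]
          rw [alphaF_eq]; rfl
      | add x y hx hy =>
          simp only [map_add, tmul_add, hx, hy]
    have key : ζ ((h * h') ⊗ₜ[k] a) = Φ (ζ (h' ⊗ₜ[k] a)) := by
      apply ξ.injective
      rw [C1, hζ, xi_zetaF jA jH ξ, xi_zetaF jA jH ξ, map_mul, mul_assoc]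
    rw [alphaF_eq, LinearMap.comp_apply, key, ← hζ, C2, alphaF_eq]
    simp only [LinearMap.comp_apply, ← hζ]
  · -- unit
    rw [alphaF_eq, LinearMap.comp_apply, zetaF_tmul, map_one, one_mul,
      ← mul_one (jA a), ← map_one jH, hsymm, abarF_tmul]
    simp
  · -- counit
    have E1 : (Coalgebra.counit (R := k) (A := X)) ∘ₗ ξ.toLinearMap
        = Coalgebra.counit (R := k) (A := A ⊗[k] H) := by
      ext a₀ h₀
      simp [hξ, TensorProduct.counit_def, mul_comm]
    have E2 : (Coalgebra.counit (R := k) (A := A)) ∘ₗ (abarF : A ⊗[k] H →ₗ[k] A)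
        = Coalgebra.counit (R := k) (A := A ⊗[k] H) := by
      ext a₀ h₀
      simp [abarF_tmul, TensorProduct.counit_def, mul_comm]
    have e2 := LinearMap.congr_fun E2 (zetaF jA jH ξ (h ⊗ₜ[k] a))
    have e1 := LinearMap.congr_fun E1 (zetaF jA jH ξ (h ⊗ₜ[k] a))
    simp only [LinearMap.comp_apply, LinearEquiv.coe_coe] at e1 e2
    rw [alphaF_eq, LinearMap.comp_apply, e2, ← e1, xi_zetaF jA jH ξ, Bialgebra.counit_mul,
      CoalgHomClass.counit_comp_apply, CoalgHomClass.counit_comp_apply]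
  · -- comul
    set ζ := zetaF jA jH ξ with hζ
    have B1 : (TensorProduct.map ξ.toLinearMap ξ.toLinearMap) ∘ₗ
        (TensorProduct.tensorTensorTensorComm k A A H H).toLinearMap
        = (LinearMap.mul' k (X ⊗[k] X)) ∘ₗ
          TensorProduct.map (TensorProduct.map (jA : A →ₗ[k] X) (jA : A →ₗ[k] X))
            (TensorProduct.map (jH : H →ₗ[k] X) (jH : H →ₗ[k] X)) := by
      ext a₁ a₂ h₁ h₂
      simp [hξ, Algebra.TensorProduct.tmul_mul_tmul]
    have hcm : ∀ (a₀ : A) (h₀ : H), Coalgebra.comul (R := k) (a₀ ⊗ₜ[k] h₀)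
        = (TensorProduct.tensorTensorTensorComm k A A H H)
            ((Coalgebra.comul (R := k) a₀) ⊗ₜ[k] (Coalgebra.comul (R := k) h₀)) := by
      intro a₀ h₀
      simp [TensorProduct.comul_def, TensorProduct.AlgebraTensorModule.tensorTensorTensorComm_eq]
    have hcm2 : Coalgebra.comul (R := k) (h ⊗ₜ[k] a)
        = (TensorProduct.tensorTensorTensorComm k H H A A)
            ((Coalgebra.comul (R := k) h) ⊗ₜ[k] (Coalgebra.comul (R := k) a)) := by
      simp [TensorProduct.comul_def, TensorProduct.AlgebraTensorModule.tensorTensorTensorComm_eq]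
    have Lc1 : (Coalgebra.comul (R := k) (A := X)) ∘ₗ ξ.toLinearMap
        = (TensorProduct.map ξ.toLinearMap ξ.toLinearMap) ∘ₗ
          (Coalgebra.comul (R := k) (A := A ⊗[k] H)) := by
      ext a₀ h₀
      have hB := LinearMap.congr_fun B1 ((Coalgebra.comul (R := k) a₀) ⊗ₜ[k]
        (Coalgebra.comul (R := k) h₀))
      simp only [LinearMap.comp_apply, LinearEquiv.coe_coe, TensorProduct.map_tmul,
        LinearMap.mul'_apply] at hB
      have e1 := CoalgHomClass.map_comp_comul_apply jA a₀
      have e2 := CoalgHomClass.map_comp_comul_apply jH h₀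
      change Coalgebra.comul (R := k) (ξ (a₀ ⊗ₜ[k] h₀))
        = (TensorProduct.map ξ.toLinearMap ξ.toLinearMap)
            (Coalgebra.comul (R := k) (a₀ ⊗ₜ[k] h₀))
      rw [hξ, Bialgebra.comul_mul, ← e1, ← e2, hcm a₀ h₀]
      exact hB.symm
    have hinv : (TensorProduct.map ξ.symm.toLinearMap ξ.symm.toLinearMap) ∘ₗ
        (TensorProduct.map ξ.toLinearMap ξ.toLinearMap)
        = LinearMap.id (R := k) (M := (A ⊗[k] H) ⊗[k] (A ⊗[k] H)) := by
      ext x y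
      simp
    have Lc2 : ∀ x : X, Coalgebra.comul (R := k) (ξ.symm x)
        = TensorProduct.map ξ.symm.toLinearMap ξ.symm.toLinearMap
            (Coalgebra.comul (R := k) x) := by
      intro x
      have h1 := LinearMap.congr_fun Lc1 (ξ.symm x)
      simp only [LinearMap.comp_apply, LinearEquiv.coe_coe, ξ.apply_symm_apply] at h1
      have h2 := LinearMap.congr_fun hinv (Coalgebra.comul (R := k) (ξ.symm x))
      rw [LinearMap.comp_apply, LinearMap.id_apply] at h2
      rw [h1]
      exact h2.symm
    have B2 : (TensorProduct.map ζ ζ) ∘ₗ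
        (TensorProduct.tensorTensorTensorComm k H H A A).toLinearMap
        = (TensorProduct.map (ξ.symm.toLinearMap) (ξ.symm.toLinearMap)) ∘ₗ
          (LinearMap.mul' k (X ⊗[k] X)) ∘ₗ
          TensorProduct.map (TensorProduct.map (jH : H →ₗ[k] X) (jH : H →ₗ[k] X))
            (TensorProduct.map (jA : A →ₗ[k] X) (jA : A →ₗ[k] X)) := by
      ext h₁ h₂ a₁ a₂
      simp [hζ, zetaF_tmul, Algebra.TensorProduct.tmul_mul_tmul]
    have Lc3 : Coalgebra.comul (R := k) (ζ (h ⊗ₜ[k] a))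
        = TensorProduct.map ζ ζ (Coalgebra.comul (R := k) (h ⊗ₜ[k] a)) := by
      have hB := LinearMap.congr_fun B2 ((Coalgebra.comul (R := k) h) ⊗ₜ[k]
        (Coalgebra.comul (R := k) a))
      simp only [LinearMap.comp_apply, LinearEquiv.coe_coe, TensorProduct.map_tmul,
        LinearMap.mul'_apply] at hB
      have e1 := CoalgHomClass.map_comp_comul_apply jH h
      have e2 := CoalgHomClass.map_comp_comul_apply jA a
      rw [hζ, zetaF_tmul, Lc2, Bialgebra.comul_mul, ← e1, ← e2, hcm2, ← hζ]
      exact hB.symm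
    have B3 : (TensorProduct.map (abarF : A ⊗[k] H →ₗ[k] A) (abarF : A ⊗[k] H →ₗ[k] A)) ∘ₗ
        (TensorProduct.tensorTensorTensorComm k A A H H).toLinearMap
        = (TensorProduct.rid k (A ⊗[k] A)).toLinearMap ∘ₗ
          LinearMap.lTensor (A ⊗[k] A) (Coalgebra.counit (R := k) (A := H ⊗[k] H)) := by
      ext a₁ a₂ h₁ h₂
      simp [abarF_tmul, TensorProduct.counit_def, smul_tmul', tmul_smul,
        smul_smul, mul_comm]
    have Lc4 : ∀ t : A ⊗[k] H, Coalgebra.comul (R := k) (abarF t)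
        = TensorProduct.map (abarF : A ⊗[k] H →ₗ[k] A) (abarF : A ⊗[k] H →ₗ[k] A)
            (Coalgebra.comul (R := k) t) := by
      intro t
      induction t using TensorProduct.induction_on with
      | zero => simp only [map_zero]
      | tmul a₀ h₀ =>
          have hB := LinearMap.congr_fun B3 ((Coalgebra.comul (R := k) a₀) ⊗ₜ[k]
            (Coalgebra.comul (R := k) h₀))
          simp only [LinearMap.comp_apply, LinearEquiv.coe_coe, LinearMap.lTensor_tmul,
            TensorProduct.rid_tmul] at hB
          rw [abarF_tmul, map_smul, hcm a₀ h₀, hB, counit_tensor_comul]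
      | add x y hx hy => simp [map_add, hx, hy]
    rw [alphaF_eq, ← hζ, LinearMap.comp_apply, Lc4, Lc3, ← LinearMap.comp_apply,
      ← TensorProduct.map_comp]
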